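/- If CRN C_f stably computes f : ℕ^d → ℕ, CRN C_g stably computes g : ℕ → ℕ, and C_f is output-oblivious, then the concatenated CRN C_{g∘f} stably computes the composition g ∘ f : ℕ^d → ℕ. -/

import Mathlib

/-- A chemical reaction network with species type `σ`, designated input species
`inputs i` for each of the `d` inputs, an output species, and a leader species. -/
structure CRN (d : ℕ) (σ : Type) [Fintype σ] [DecidableEq σ] where
  /-- Each reaction is a pair `(r, p)` of reactant counts and product counts. -/
  reactions : Finset ((σ → ℕ) × (σ → ℕ))
  inputs : Fin d → σ
  output : σ
  leader : σ
  inputs_inj : Function.Injective inputs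
  leader_not_input : ∀ i, inputs i ≠ leader

namespace CRN

variable {d : ℕ} {σ : Type} [Fintype σ] [DecidableEq σ]

/-- One reaction step: some reaction `(r, p)` with `r ≤ c` pointwise fires,
yielding `c - r + p`. -/
def Step (C : CRN d σ) (c c' : σ → ℕ) : Prop :=
  ∃ rp ∈ C.reactions, rp.1 ≤ c ∧ c' = c - rp.1 + rp.2

/-- Reachability by a finite sequence of reaction steps. -/
def Reachable (C : CRN d σ) : (σ → ℕ) → (σ → ℕ) → Prop :=
  Relation.ReflTransGen C.Step

/-- The initial configuration encoding input `x`: count `x i` of input species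
`inputs i`, count 1 of the leader, count 0 of everything else. -/
def init (C : CRN d σ) (x : Fin d → ℕ) : σ → ℕ :=
  fun s => (∑ i, if C.inputs i = s then x i else 0) + (if s = C.leader then 1 else 0)

/-- A configuration is stable if the output count never changes from it. -/
def Stable (C : CRN d σ) (c : σ → ℕ) : Prop :=
  ∀ c', C.Reachable c c' → c' C.output = c C.output

/-- `C` stably computes `f` if from every configuration reachable from an initial
configuration, a stable configuration with correct output count is reachable. -/
def StablyComputes (C : CRN d σ) (f : (Fin d → ℕ) → ℕ) : Prop :=
  ∀ x c, C.Reachable (C.init x) c →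
    ∃ o, C.Reachable c o ∧ C.Stable o ∧ o C.output = f x

/-- A CRN is output-oblivious if the output species is never a reactant. -/
def OutputOblivious (C : CRN d σ) : Prop :=
  ∀ rp ∈ C.reactions, rp.1 C.output = 0

/-- A CRN is output-monotonic if no reaction decreases the output species count. -/
def OutputMonotonic (C : CRN d σ) : Prop :=
  ∀ rp ∈ C.reactions, rp.1 C.output ≤ rp.2 C.output

end CRN

/-- `f` is obliviously-computable if some output-oblivious CRN stably computes it. -/
def ObliviouslyComputable {d : ℕ} (f : (Fin d → ℕ) → ℕ) : Prop :=
  ∃ (n : ℕ) (C : CRN d (Fin n)), C.OutputOblivious ∧ C.StablyComputes f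

/-- Push a count vector forward along a species renaming `e`. -/
def pushConfig {σ τ : Type} [Fintype σ] [DecidableEq τ] (e : σ → τ) (v : σ → ℕ) :
    τ → ℕ :=
  fun t => ∑ s, if e s = t then v s else 0

/-- The species of the concatenation of `Cf` and `Cg`: the species of `Cf`, the
species of `Cg` other than its input species (which is identified with the output
species of `Cf`), and a fresh leader (`none`). -/
abbrev ConcatSpecies {σf σg : Type} [Fintype σg] [DecidableEq σg]
    (Cg : CRN 1 σg) : Type :=
  Option (σf ⊕ {t : σg // ¬ t = Cg.inputs 0})

/-- Embedding of the species of `Cf` into the concatenated species. -/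
def embF {σf σg : Type} [Fintype σg] [DecidableEq σg] (Cg : CRN 1 σg) (s : σf) :
    ConcatSpecies (σf := σf) Cg :=
  some (Sum.inl s)

/-- Embedding of the species of `Cg` into the concatenated species: the input
species of `Cg` is renamed to the output species of `Cf`. -/
def embG {d : ℕ} {σf σg : Type} [Fintype σf] [DecidableEq σf] [Fintype σg]
    [DecidableEq σg] (Cf : CRN d σf) (Cg : CRN 1 σg) (s : σg) :
    ConcatSpecies (σf := σf) Cg :=
  if h : s = Cg.inputs 0 then some (Sum.inl Cf.output) else some (Sum.inr ⟨s, h⟩)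

/-- The concatenated CRN `C_{g∘f}`: the reactions of `Cf` and `Cg` (with the output
species of `Cf` renamed to match the input species of `Cg`, and all other species
disjoint), plus the reaction `L → L^f + L^g` for a fresh leader `L`.  Its inputs are
those of `Cf`, its output is that of `Cg`, and its leader is `L`. -/
def concatCRN {d : ℕ} {σf σg : Type} [Fintype σf] [DecidableEq σf] [Fintype σg]
    [DecidableEq σg] (Cf : CRN d σf) (Cg : CRN 1 σg) :
    CRN d (ConcatSpecies (σf := σf) Cg) where
  reactions :=
    (Cf.reactions.image fun rp =>
      (pushConfig (embF Cg) rp.1, pushConfig (embF Cg) rp.2)) ∪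
    (Cg.reactions.image fun rp =>
      (pushConfig (embG Cf Cg) rp.1, pushConfig (embG Cf Cg) rp.2)) ∪
    {(Pi.single none 1,
      Pi.single (embF Cg Cf.leader) 1 + Pi.single (embG Cf Cg Cg.leader) 1)}
  inputs := fun i => embF Cg (Cf.inputs i)
  output := embG Cf Cg Cg.output
  leader := none
  inputs_inj := by
    intro i j hij
    exact Cf.inputs_inj (by simpa [embF] using hij)
  leader_not_input := by
    intro i
    simp [embF]


section Aux
set_option linter.unusedSectionVars false

lemma CRN.Step.add_right {d : ℕ} {σ : Type} [Fintype σ] [DecidableEq σ]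
    {C : CRN d σ} {u v : σ → ℕ} (h : C.Step u v) (w : σ → ℕ) :
    C.Step (u + w) (v + w) := by
  obtain ⟨rp, hm, hle, rfl⟩ := h
  refine ⟨rp, hm, le_trans hle le_self_add, ?_⟩
  funext s
  have := Pi.le_def.mp hle s
  simp only [Pi.add_apply, Pi.sub_apply]
  omega

lemma CRN.Reachable.add_right {d : ℕ} {σ : Type} [Fintype σ] [DecidableEq σ]
    {C : CRN d σ} {u v : σ → ℕ} (h : C.Reachable u v) (w : σ → ℕ) :
    C.Reachable (u + w) (v + w) :=
  Relation.ReflTransGen.lift (fun z => z + w) (fun _ _ h => CRN.Step.add_right h w) _ _ h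

lemma CRN.reach_output_mono {d : ℕ} {σ : Type} [Fintype σ] [DecidableEq σ]
    {C : CRN d σ} (hob : C.OutputOblivious) {u v : σ → ℕ}
    (h : C.Reachable u v) : u C.output ≤ v C.output := by
  induction h with
  | refl => exact le_rfl
  | tail h1 h2 ih =>
    obtain ⟨rp, hm, hle, rfl⟩ := h2
    have h0 := hob rp hm
    simp only [Pi.add_apply, Pi.sub_apply, h0]
    omega

lemma pushConfig_apply {σ' τ : Type} [Fintype σ'] [DecidableEq σ'] [DecidableEq τ]
    {e : σ' → τ} (he : Function.Injective e) (v : σ' → ℕ) (s : σ') :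
    pushConfig e v (e s) = v s := by
  simp [pushConfig, he.eq_iff]

lemma pushConfig_eq_zero {σ' τ : Type} [Fintype σ'] [DecidableEq τ] {e : σ' → τ}
    (v : σ' → ℕ) {t : τ} (h : ∀ s, e s ≠ t) : pushConfig e v t = 0 :=
  Finset.sum_eq_zero fun s _ => if_neg (h s)

variable {d : ℕ} {σf σg : Type} [Fintype σf] [DecidableEq σf] [Fintype σg]
  [DecidableEq σg] (Cf : CRN d σf) (Cg : CRN 1 σg)

lemma embF_injective : Function.Injective (embF (σf := σf) Cg) := by
  intro a b h; simpa [embF] using h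

lemma embG_injective : Function.Injective (embG Cf Cg) := by
  intro a b h
  unfold embG at h
  split_ifs at h with ha hb hb
  · exact ha.trans hb.symm
  · simp at h
  · simp at h
  · simpa using h

lemma embF_ne_none (s : σf) : embF (σf := σf) Cg s ≠ none := by simp [embF]

lemma embG_ne_none (s : σg) : embG Cf Cg s ≠ none := by
  unfold embG; split_ifs <;> simp

lemma embG_input : embG Cf Cg (Cg.inputs 0) = embF Cg Cf.output := by
  simp [embG, embF]

lemma embG_eq_embF_iff {s : σg} {s' : σf} :
    embG Cf Cg s = embF Cg s' ↔ s = Cg.inputs 0 ∧ s' = Cf.output := by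
  unfold embG embF
  split_ifs with h
  · simp only [Option.some.injEq, Sum.inl.injEq]
    constructor
    · intro h2; exact ⟨h, h2.symm⟩
    · intro h2; exact h2.2.symm
  · simp [h]

lemma embF_ne_embG {s : σg} (h : s ≠ Cg.inputs 0) (s' : σf) :
    embF Cg s' ≠ embG Cf Cg s :=
  fun hc => h ((embG_eq_embF_iff Cf Cg).mp hc.symm).1

lemma embG_ne_embF {s' : σf} (h : s' ≠ Cf.output) (s : σg) :
    embG Cf Cg s ≠ embF Cg s' :=
  fun hc => h ((embG_eq_embF_iff Cf Cg).mp hc).2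

lemma memF {rp : (σf → ℕ) × (σf → ℕ)} (h : rp ∈ Cf.reactions) :
    (pushConfig (embF Cg) rp.1, pushConfig (embF Cg) rp.2) ∈
      (concatCRN Cf Cg).reactions :=
  Finset.mem_union_left _ (Finset.mem_union_left _ (Finset.mem_image_of_mem _ h))

lemma memG {rp : (σg → ℕ) × (σg → ℕ)} (h : rp ∈ Cg.reactions) :
    (pushConfig (embG Cf Cg) rp.1, pushConfig (embG Cf Cg) rp.2) ∈
      (concatCRN Cf Cg).reactions :=
  Finset.mem_union_left _ (Finset.mem_union_right _ (Finset.mem_image_of_mem _ h))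

lemma memL :
    ((Pi.single (none : ConcatSpecies (σf := σf) Cg) 1 : ConcatSpecies (σf := σf) Cg → ℕ),
      Pi.single (embF Cg Cf.leader) 1 + Pi.single (embG Cf Cg Cg.leader) 1) ∈
      (concatCRN Cf Cg).reactions :=
  Finset.mem_union_right _ (Finset.mem_singleton_self _)

lemma mem_concat {rp' : (ConcatSpecies (σf := σf) Cg → ℕ) × (ConcatSpecies (σf := σf) Cg → ℕ)}
    (hm : rp' ∈ (concatCRN Cf Cg).reactions) :
    (∃ rp ∈ Cf.reactions, (pushConfig (embF Cg) rp.1, pushConfig (embF Cg) rp.2) = rp') ∨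
    (∃ rp ∈ Cg.reactions, (pushConfig (embG Cf Cg) rp.1, pushConfig (embG Cf Cg) rp.2) = rp') ∨
    rp' = (Pi.single none 1,
      Pi.single (embF Cg Cf.leader) 1 + Pi.single (embG Cf Cg Cg.leader) 1) := by
  simp only [concatCRN, Finset.mem_union, Finset.mem_image, Finset.mem_singleton] at hm
  rcases hm with (⟨rp, h1, h2⟩ | ⟨rp, h1, h2⟩) | h
  · exact Or.inl ⟨rp, h1, h2⟩
  · exact Or.inr (Or.inl ⟨rp, h1, h2⟩)
  · exact Or.inr (Or.inr h)

end Aux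

section Aux2
set_option linter.unusedSectionVars false

variable {d : ℕ} {σf σg : Type} [Fintype σf] [DecidableEq σf] [Fintype σg]
  [DecidableEq σg] (Cf : CRN d σf) (Cg : CRN 1 σg)

lemma stepF (hob : Cf.OutputOblivious) {v v' : σf → ℕ} (hst : Cf.Step v v')
    (c : ConcatSpecies (σf := σf) Cg → ℕ)
    (hc : ∀ s, s ≠ Cf.output → c (embF Cg s) = v s) :
    ∃ c', (concatCRN Cf Cg).Step c c' ∧ (∀ s, s ≠ Cf.output → c' (embF Cg s) = v' s) ∧
      c' (embF Cg Cf.output) + v Cf.output = c (embF Cg Cf.output) + v' Cf.output ∧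
      (∀ t, (∀ s, embF Cg s ≠ t) → c' t = c t) := by
  obtain ⟨rp, hm, hle, rfl⟩ := hst
  have hr0 : rp.1 Cf.output = 0 := hob rp hm
  have hle' : pushConfig (embF Cg) rp.1 ≤ c := by
    intro t
    by_cases h : ∃ s, embF Cg s = t
    · obtain ⟨s, rfl⟩ := h
      rw [pushConfig_apply (embF_injective Cg)]
      rcases eq_or_ne s Cf.output with hs | hs
      · subst hs; rw [hr0]; exact Nat.zero_le _
      · rw [hc s hs]; exact Pi.le_def.mp hle s
    · rw [pushConfig_eq_zero _ (fun s hs => h ⟨s, hs⟩)]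
      exact Nat.zero_le _
  refine ⟨_, ⟨_, memF Cf Cg hm, hle', rfl⟩, ?_, ?_, ?_⟩
  · intro s hs
    simp only [Pi.add_apply, Pi.sub_apply, pushConfig_apply (embF_injective Cg),
      hc s hs]
  · simp only [Pi.add_apply, Pi.sub_apply, pushConfig_apply (embF_injective Cg), hr0]
    omega
  · intro t ht
    simp [Pi.sub_apply, pushConfig_eq_zero _ ht]

lemma stepG {w w' : σg → ℕ} (hst : Cg.Step w w') (c : ConcatSpecies (σf := σf) Cg → ℕ)
    (hc : ∀ s, c (embG Cf Cg s) = w s) :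
    ∃ c', (concatCRN Cf Cg).Step c c' ∧ (∀ s, c' (embG Cf Cg s) = w' s) ∧
      (∀ t, (∀ s, embG Cf Cg s ≠ t) → c' t = c t) := by
  obtain ⟨rp, hm, hle, rfl⟩ := hst
  have hle' : pushConfig (embG Cf Cg) rp.1 ≤ c := by
    intro t
    by_cases h : ∃ s, embG Cf Cg s = t
    · obtain ⟨s, rfl⟩ := h
      rw [pushConfig_apply (embG_injective Cf Cg), hc s]
      exact Pi.le_def.mp hle s
    · rw [pushConfig_eq_zero _ (fun s hs => h ⟨s, hs⟩)]
      exact Nat.zero_le _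
  refine ⟨_, ⟨_, memG Cf Cg hm, hle', rfl⟩, ?_, ?_⟩
  · intro s
    simp only [Pi.add_apply, Pi.sub_apply, pushConfig_apply (embG_injective Cf Cg),
      hc s]
  · intro t ht
    simp [Pi.sub_apply, pushConfig_eq_zero _ ht]

lemma reachF (hob : Cf.OutputOblivious) {v v' : σf → ℕ} (h : Cf.Reachable v v') :
    ∀ c : ConcatSpecies (σf := σf) Cg → ℕ, (∀ s, s ≠ Cf.output → c (embF Cg s) = v s) →
    ∃ c', (concatCRN Cf Cg).Reachable c c' ∧
      (∀ s, s ≠ Cf.output → c' (embF Cg s) = v' s) ∧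
      c' (embF Cg Cf.output) + v Cf.output = c (embF Cg Cf.output) + v' Cf.output ∧
      (∀ t, (∀ s, embF Cg s ≠ t) → c' t = c t) := by
  induction h with
  | refl => exact fun c hc => ⟨c, Relation.ReflTransGen.refl, hc, rfl, fun _ _ => rfl⟩
  | @tail v1 v2 h1 h2 ih =>
    intro c hc
    obtain ⟨c1, r1, o1, e1, n1⟩ := ih c hc
    obtain ⟨c2, s2, o2, e2, n2⟩ := stepF Cf Cg hob h2 c1 o1
    exact ⟨c2, Relation.ReflTransGen.tail r1 s2, o2, by omega,
      fun t ht => (n2 t ht).trans (n1 t ht)⟩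

lemma reachG {w w' : σg → ℕ} (h : Cg.Reachable w w') :
    ∀ c : ConcatSpecies (σf := σf) Cg → ℕ, (∀ s, c (embG Cf Cg s) = w s) →
    ∃ c', (concatCRN Cf Cg).Reachable c c' ∧ (∀ s, c' (embG Cf Cg s) = w' s) ∧
      (∀ t, (∀ s, embG Cf Cg s ≠ t) → c' t = c t) := by
  induction h with
  | refl => exact fun c hc => ⟨c, Relation.ReflTransGen.refl, hc, fun _ _ => rfl⟩
  | @tail w1 w2 h1 h2 ih =>
    intro c hc
    obtain ⟨c1, r1, o1, n1⟩ := ih c hc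
    obtain ⟨c2, s2, o2, n2⟩ := stepG Cf Cg h2 c1 o1
    exact ⟨c2, Relation.ReflTransGen.tail r1 s2, o2,
      fun t ht => (n2 t ht).trans (n1 t ht)⟩

lemma initG_add (n m : ℕ) :
    Cg.init (fun _ => n + m) = Cg.init (fun _ => n) + Pi.single (Cg.inputs 0) m := by
  funext s
  rcases eq_or_ne s (Cg.inputs 0) with h | h
  · subst h
    have h2 : Cg.inputs 0 ≠ Cg.leader := Cg.leader_not_input 0
    simp [CRN.init, Fin.sum_univ_one, h2]
  · simp [CRN.init, Fin.sum_univ_one, Pi.single_apply, h, Ne.symm h]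

lemma concat_init_none (x : Fin d → ℕ) : (concatCRN Cf Cg).init x none = 1 := by
  simp [CRN.init, concatCRN, embF]

lemma concat_init_embF (x : Fin d → ℕ) (s : σf) :
    (concatCRN Cf Cg).init x (embF Cg s) = ∑ i, if Cf.inputs i = s then x i else 0 := by
  simp [CRN.init, concatCRN, embF]

lemma concat_init_inr (x : Fin d → ℕ) (t : {t : σg // ¬ t = Cg.inputs 0}) :
    (concatCRN Cf Cg).init x (some (Sum.inr t)) = 0 := by
  simp [CRN.init, concatCRN, embF]

end Aux2

/-- The invariant maintained by all configurations reachable from an initial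
configuration of the concatenated CRN. -/
def ConcatInv {d : ℕ} {σf σg : Type} [Fintype σf] [DecidableEq σf] [Fintype σg]
    [DecidableEq σg] (Cf : CRN d σf) (Cg : CRN 1 σg) (x : Fin d → ℕ)
    (c : ConcatSpecies (σf := σf) Cg → ℕ) : Prop :=
  c none ≤ 1 ∧ ∃ a : σf → ℕ,
    Cf.Reachable (Cf.init x) (a + Pi.single Cf.leader (c none)) ∧
    (∀ s, s ≠ Cf.output → c (embF Cg s) = a s) ∧
    Cg.Reachable (Cg.init fun _ => a Cf.output)
      ((fun s => c (embG Cf Cg s)) + Pi.single Cg.leader (c none))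

section Aux3
set_option linter.unusedSectionVars false

variable {d : ℕ} {σf σg : Type} [Fintype σf] [DecidableEq σf] [Fintype σg]
  [DecidableEq σg] (Cf : CRN d σf) (Cg : CRN 1 σg)

lemma inv_init (x : Fin d → ℕ) : ConcatInv Cf Cg x ((concatCRN Cf Cg).init x) := by
  have hn := concat_init_none Cf Cg x
  refine ⟨by omega, fun s => ∑ i, if Cf.inputs i = s then x i else 0, ?_, ?_, ?_⟩
  · rw [hn]
    have h : Cf.init x
        = (fun s => ∑ i, if Cf.inputs i = s then x i else 0) + Pi.single Cf.leader 1 := by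
      funext s
      simp [CRN.init, Pi.single_apply]
    rw [← h]
    exact Relation.ReflTransGen.refl
  · intro s _
    exact concat_init_embF Cf Cg x s
  · rw [hn]
    have h : ((fun s => (concatCRN Cf Cg).init x (embG Cf Cg s)) + Pi.single Cg.leader 1)
        = Cg.init (fun _ => ∑ i, if Cf.inputs i = Cf.output then x i else 0) := by
      funext s
      rcases eq_or_ne s (Cg.inputs 0) with h | h
      · subst h
        rw [Pi.add_apply, embG_input, concat_init_embF]
        simp [CRN.init, Fin.sum_univ_one, Pi.single_apply, Cg.leader_not_input 0]
      · rw [Pi.add_apply, show embG Cf Cg s = some (Sum.inr ⟨s, h⟩) from dif_neg h,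
          concat_init_inr]
        simp [CRN.init, Fin.sum_univ_one, Pi.single_apply, Ne.symm h]
    rw [h]
    exact Relation.ReflTransGen.refl

end Aux3

section Aux4
set_option linter.unusedSectionVars false

variable {d : ℕ} {σf σg : Type} [Fintype σf] [DecidableEq σf] [Fintype σg]
  [DecidableEq σg] (Cf : CRN d σf) (Cg : CRN 1 σg)

lemma inv_step (hob : Cf.OutputOblivious) {x : Fin d → ℕ}
    {c c' : ConcatSpecies (σf := σf) Cg → ℕ}
    (hinv : ConcatInv Cf Cg x c) (hstep : (concatCRN Cf Cg).Step c c') :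
    ConcatInv Cf Cg x c' := by
  obtain ⟨hb, a, hF, hoff, hG⟩ := hinv
  obtain ⟨rp', hm, hle, hc'⟩ := hstep
  have happ : ∀ t, c' t = c t - rp'.1 t + rp'.2 t := fun t => by rw [hc']; rfl
  rcases mem_concat Cf Cg hm with ⟨rp, hrp, rfl⟩ | ⟨rp, hrp, rfl⟩ | rfl
  · -- a reaction of Cf
    have happF : ∀ t, c' t = c t - pushConfig (embF Cg) rp.1 t
        + pushConfig (embF Cg) rp.2 t := happ
    have hleF : pushConfig (embF Cg) rp.1 ≤ c := hle
    have hr0 : rp.1 Cf.output = 0 := hob rp hrp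
    have hle2 : ∀ s, rp.1 s ≤ c (embF Cg s) := fun s => by
      have h := Pi.le_def.mp hleF (embF Cg s)
      rwa [pushConfig_apply (embF_injective Cg)] at h
    have hra : rp.1 ≤ a := by
      rw [Pi.le_def]
      intro s
      rcases eq_or_ne s Cf.output with h | h
      · rw [h, hr0]; exact Nat.zero_le _
      · rw [← hoff s h]; exact hle2 s
    have hnone : c' none = c none := by
      rw [happF none, pushConfig_eq_zero _ (fun s => embF_ne_none Cg s),
        pushConfig_eq_zero _ (fun s => embF_ne_none Cg s)]
      omega
    refine ⟨by rw [hnone]; exact hb, a - rp.1 + rp.2, ?_, ?_, ?_⟩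
    · rw [hnone]
      refine Relation.ReflTransGen.tail hF ⟨rp, hrp, le_trans hra le_self_add, ?_⟩
      funext s
      have := Pi.le_def.mp hra s
      simp only [Pi.add_apply, Pi.sub_apply]
      omega
    · intro s hs
      rw [happF (embF Cg s), pushConfig_apply (embF_injective Cg),
        pushConfig_apply (embF_injective Cg), hoff s hs]
      simp only [Pi.add_apply, Pi.sub_apply]
    · have houta : (a - rp.1 + rp.2) Cf.output = a Cf.output + rp.2 Cf.output := by
        simp only [Pi.add_apply, Pi.sub_apply, hr0]
        omega
      have hg2 : (fun s => c' (embG Cf Cg s))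
          = (fun s => c (embG Cf Cg s)) + Pi.single (Cg.inputs 0) (rp.2 Cf.output) := by
        funext s
        rcases eq_or_ne s (Cg.inputs 0) with h | h
        · subst h
          rw [Pi.add_apply, embG_input, happF (embF Cg Cf.output),
            pushConfig_apply (embF_injective Cg), pushConfig_apply (embF_injective Cg),
            hr0, Pi.single_eq_same]
          omega
        · rw [Pi.add_apply, happF (embG Cf Cg s),
            pushConfig_eq_zero _ (embF_ne_embG Cf Cg h),
            pushConfig_eq_zero _ (embF_ne_embG Cf Cg h),
            Pi.single_eq_of_ne h]
          omega
      rw [houta, hnone, hg2, initG_add, add_right_comm]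
      exact hG.add_right _
  · -- a reaction of Cg
    have happG : ∀ t, c' t = c t - pushConfig (embG Cf Cg) rp.1 t
        + pushConfig (embG Cf Cg) rp.2 t := happ
    have hleG : pushConfig (embG Cf Cg) rp.1 ≤ c := hle
    have hle2 : ∀ s, rp.1 s ≤ c (embG Cf Cg s) := fun s => by
      have h := Pi.le_def.mp hleG (embG Cf Cg s)
      rwa [pushConfig_apply (embG_injective Cf Cg)] at h
    have hnone : c' none = c none := by
      rw [happG none, pushConfig_eq_zero _ (fun s => embG_ne_none Cf Cg s),
        pushConfig_eq_zero _ (fun s => embG_ne_none Cf Cg s)]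
      omega
    have hoff' : ∀ s, s ≠ Cf.output → c' (embF Cg s) = a s := by
      intro s hs
      rw [happG (embF Cg s), pushConfig_eq_zero _ (embG_ne_embF Cf Cg hs),
        pushConfig_eq_zero _ (embG_ne_embF Cf Cg hs), hoff s hs]
      omega
    refine ⟨by rw [hnone]; exact hb, a, by rw [hnone]; exact hF, hoff', ?_⟩
    have hg2 : (fun s => c' (embG Cf Cg s))
        = ((fun s => c (embG Cf Cg s)) - rp.1 + rp.2) := by
      funext s
      rw [Pi.add_apply, Pi.sub_apply, happG (embG Cf Cg s),
        pushConfig_apply (embG_injective Cf Cg), pushConfig_apply (embG_injective Cf Cg)]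
    rw [hnone, hg2]
    have hstepG : Cg.Step ((fun s => c (embG Cf Cg s)) + Pi.single Cg.leader (c none))
        (((fun s => c (embG Cf Cg s)) - rp.1 + rp.2) + Pi.single Cg.leader (c none)) := by
      refine ⟨rp, hrp, le_trans (Pi.le_def.mpr hle2) le_self_add, ?_⟩
      funext s
      have := hle2 s
      simp only [Pi.add_apply, Pi.sub_apply]
      omega
    exact Relation.ReflTransGen.tail hG hstepG
  · -- the leader reaction
    have happL : ∀ t, c' t = c t
        - (Pi.single (none : ConcatSpecies (σf := σf) Cg) 1 :
            ConcatSpecies (σf := σf) Cg → ℕ) t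
        + ((Pi.single (embF Cg Cf.leader) 1 + Pi.single (embG Cf Cg Cg.leader) 1 :
            ConcatSpecies (σf := σf) Cg → ℕ)) t := happ
    have hleL : (Pi.single none 1 : ConcatSpecies (σf := σf) Cg → ℕ) ≤ c := hle
    have hcn : c none = 1 := by
      have h := Pi.le_def.mp hleL none
      rw [Pi.single_eq_same] at h
      omega
    have hnone : c' none = 0 := by
      rw [happL none, Pi.add_apply, Pi.single_eq_same,
        Pi.single_eq_of_ne (Ne.symm (embF_ne_none Cg Cf.leader)),
        Pi.single_eq_of_ne (Ne.symm (embG_ne_none Cf Cg Cg.leader)), hcn]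
      omega
    have hLgni : Cg.leader ≠ Cg.inputs 0 := Ne.symm (Cg.leader_not_input 0)
    refine ⟨by omega, a + Pi.single Cf.leader 1, ?_, ?_, ?_⟩
    · rw [hnone]
      rw [hcn] at hF
      simpa using hF
    · intro s hs
      rw [happL (embF Cg s), Pi.add_apply,
        Pi.single_eq_of_ne (embF_ne_none Cg s),
        Pi.single_eq_of_ne (embF_ne_embG Cf Cg hLgni s)]
      have : (Pi.single (embF Cg Cf.leader) 1 : ConcatSpecies (σf := σf) Cg → ℕ)
            (embF Cg s)
          = (Pi.single Cf.leader 1 : σf → ℕ) s := by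
        rcases eq_or_ne s Cf.leader with h | h
        · subst h; rw [Pi.single_eq_same, Pi.single_eq_same]
        · rw [Pi.single_eq_of_ne h,
            Pi.single_eq_of_ne (fun hc => h (embF_injective Cg hc))]
      rw [this, hoff s hs, Pi.add_apply]
      omega
    · have houta : (a + (Pi.single Cf.leader 1 : σf → ℕ)) Cf.output
          = a Cf.output + (Pi.single Cf.leader 1 : σf → ℕ) Cf.output := rfl
      have hg2 : (fun s => c' (embG Cf Cg s))
          = ((fun s => c (embG Cf Cg s)) + Pi.single Cg.leader 1)
            + Pi.single (Cg.inputs 0) ((Pi.single Cf.leader 1 : σf → ℕ) Cf.output) := by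
        funext s
        rw [Pi.add_apply, Pi.add_apply, happL (embG Cf Cg s), Pi.add_apply,
          Pi.single_eq_of_ne (embG_ne_none Cf Cg s)]
        have h1 : (Pi.single (embG Cf Cg Cg.leader) 1 : ConcatSpecies (σf := σf) Cg → ℕ)
              (embG Cf Cg s)
            = (Pi.single Cg.leader 1 : σg → ℕ) s := by
          rcases eq_or_ne s Cg.leader with h | h
          · subst h; rw [Pi.single_eq_same, Pi.single_eq_same]
          · rw [Pi.single_eq_of_ne h,
              Pi.single_eq_of_ne (fun hc => h (embG_injective Cf Cg hc))]
        have h2 : (Pi.single (embF Cg Cf.leader) 1 : ConcatSpecies (σf := σf) Cg → ℕ)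
              (embG Cf Cg s)
            = (Pi.single (Cg.inputs 0) ((Pi.single Cf.leader 1 : σf → ℕ) Cf.output) :
                σg → ℕ) s := by
          rcases eq_or_ne s (Cg.inputs 0) with h | h
          · subst h
            rw [embG_input, Pi.single_eq_same]
            rcases eq_or_ne Cf.output Cf.leader with h3 | h3
            · rw [h3, Pi.single_eq_same, Pi.single_eq_same]
            · rw [Pi.single_eq_of_ne h3,
                Pi.single_eq_of_ne (fun hc => h3 (embF_injective Cg hc))]
          · rw [Pi.single_eq_of_ne h,
              Pi.single_eq_of_ne (Ne.symm (embF_ne_embG Cf Cg h Cf.leader))]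
        rw [h1, h2]
        omega
      rw [hcn] at hG
      rw [hnone, houta, hg2, initG_add, Pi.single_zero, add_zero]
      exact hG.add_right _

lemma inv_reach (hob : Cf.OutputOblivious) {x : Fin d → ℕ}
    {c : ConcatSpecies (σf := σf) Cg → ℕ}
    (h : (concatCRN Cf Cg).Reachable ((concatCRN Cf Cg).init x) c) :
    ConcatInv Cf Cg x c := by
  induction h with
  | refl => exact inv_init Cf Cg x
  | tail h1 h2 ih => exact inv_step Cf Cg hob ih h2

end Aux4

/-- If `Cf` stably computes `f`, `Cg` stably computes `g`, and `Cf` is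
output-oblivious, then the concatenated CRN stably computes `g ∘ f`. -/
theorem concat_stablyComputes {d : ℕ} {σf σg : Type} [Fintype σf] [DecidableEq σf]
    [Fintype σg] [DecidableEq σg] (Cf : CRN d σf) (Cg : CRN 1 σg)
    (f : (Fin d → ℕ) → ℕ) (g : ℕ → ℕ)
    (hf : Cf.StablyComputes f) (hg : Cg.StablyComputes fun x : Fin 1 → ℕ => g (x 0))
    (hob : Cf.OutputOblivious) :
    (concatCRN Cf Cg).StablyComputes fun x => g (f x) := by
  intro x c hreach
  suffices key : ∀ c : ConcatSpecies (σf := σf) Cg → ℕ, ConcatInv Cf Cg x c →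
      c none = 0 →
      ∃ o, (concatCRN Cf Cg).Reachable c o ∧ (concatCRN Cf Cg).Stable o ∧
        o (concatCRN Cf Cg).output = g (f x) by
    have hinv := inv_reach Cf Cg hob hreach
    have hb : c none ≤ 1 := hinv.1
    rcases Nat.eq_zero_or_pos (c none) with h0 | hpos
    · exact key c hinv h0
    · have hcn : c none = 1 := le_antisymm hb hpos
      have hle : (Pi.single (none : ConcatSpecies (σf := σf) Cg) 1 :
          ConcatSpecies (σf := σf) Cg → ℕ) ≤ c := by
        rw [Pi.le_def]
        intro t
        rcases eq_or_ne t none with rfl | ht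
        · rw [Pi.single_eq_same, hcn]
        · rw [Pi.single_eq_of_ne ht]; exact Nat.zero_le _
      have hstep : (concatCRN Cf Cg).Step c
          (c - (Pi.single (none : ConcatSpecies (σf := σf) Cg) 1 :
              ConcatSpecies (σf := σf) Cg → ℕ)
            + (Pi.single (embF Cg Cf.leader) 1 + Pi.single (embG Cf Cg Cg.leader) 1)) :=
        ⟨_, memL Cf Cg, hle, rfl⟩
      have hinv1 := inv_step Cf Cg hob hinv hstep
      have hc1none : ((c - (Pi.single (none : ConcatSpecies (σf := σf) Cg) 1 :
              ConcatSpecies (σf := σf) Cg → ℕ)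
          + (Pi.single (embF Cg Cf.leader) 1 + Pi.single (embG Cf Cg Cg.leader) 1) :
            ConcatSpecies (σf := σf) Cg → ℕ))
            none = 0 := by
        simp only [Pi.add_apply, Pi.sub_apply, Pi.single_eq_same,
          Pi.single_eq_of_ne (Ne.symm (embF_ne_none Cg Cf.leader)),
          Pi.single_eq_of_ne (Ne.symm (embG_ne_none Cf Cg Cg.leader)), hcn]
        omega
      obtain ⟨o, ho1, ho2, ho3⟩ := key _ hinv1 hc1none
      exact ⟨o, Relation.ReflTransGen.head hstep ho1, ho2, ho3⟩
  intro c hinv h0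
  obtain ⟨-, a, hF, hoff, hG⟩ := hinv
  rw [h0] at hF hG
  rw [Pi.single_zero, add_zero] at hF hG
  obtain ⟨of, hof1, hof2, hof3⟩ := hf x a hF
  obtain ⟨c2, hr2, hoff2, hout2, hrest2⟩ := reachF Cf Cg hob hof1 c hoff
  have hmono : a Cf.output ≤ of Cf.output := CRN.reach_output_mono hob hof1
  have hw2 : (fun s => c2 (embG Cf Cg s))
      = (fun s => c (embG Cf Cg s))
        + Pi.single (Cg.inputs 0) (of Cf.output - a Cf.output) := by
    funext s
    rcases eq_or_ne s (Cg.inputs 0) with rfl | h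
    · simp only [Pi.add_apply, embG_input, Pi.single_eq_same]
      omega
    · simp only [Pi.add_apply, Pi.single_eq_of_ne h,
        hrest2 _ (embF_ne_embG Cf Cg h)]
      omega
  have hfin : (fun _ : Fin 1 => a Cf.output + (of Cf.output - a Cf.output))
      = (fun _ : Fin 1 => f x) := by
    funext i; omega
  have hG2 : Cg.Reachable (Cg.init fun _ => f x) (fun s => c2 (embG Cf Cg s)) := by
    have h1 := hG.add_right (Pi.single (Cg.inputs 0) (of Cf.output - a Cf.output))
    rw [← initG_add, hfin, ← hw2] at h1
    exact h1
  obtain ⟨og, hog1, hog2, hog3⟩ := hg (fun _ => f x) _ hG2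
  replace hog3 : og Cg.output = g (f x) := hog3
  obtain ⟨c3, hr3, hg3, hrest3⟩ := reachG Cf Cg hog1 c2 (fun s => rfl)
  have hc3none : c3 none = 0 := by
    rw [hrest3 none (fun s => embG_ne_none Cf Cg s),
      hrest2 none (fun s => embF_ne_none Cg s), h0]
  have hc3off : ∀ s, s ≠ Cf.output → c3 (embF Cg s) = of s := fun s hs => by
    rw [hrest3 _ (fun s0 => embG_ne_embF Cf Cg hs s0), hoff2 s hs]
  have hJ : ∀ c4, (concatCRN Cf Cg).Reachable c3 c4 →
      c4 none = 0
      ∧ (∃ u, Cf.Reachable of u ∧ ∀ s, s ≠ Cf.output → c4 (embF Cg s) = u s)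
      ∧ Cg.Reachable og (fun s => c4 (embG Cf Cg s)) := by
    intro c4 h4
    induction h4 with
    | refl =>
      refine ⟨hc3none, ⟨of, Relation.ReflTransGen.refl, hc3off⟩, ?_⟩
      have h : (fun s => c3 (embG Cf Cg s)) = og := funext hg3
      rw [h]
      exact Relation.ReflTransGen.refl
    | @tail c5 c6 h5 h6 ih =>
      obtain ⟨ihn, ⟨u, hu1, hu2⟩, ihG⟩ := ih
      obtain ⟨rp', hm, hle, hc'⟩ := h6
      have happ : ∀ t, c6 t = c5 t - rp'.1 t + rp'.2 t := fun t => by rw [hc']; rfl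
      rcases mem_concat Cf Cg hm with ⟨rp, hrp, rfl⟩ | ⟨rp, hrp, rfl⟩ | rfl
      · have happF : ∀ t, c6 t = c5 t - pushConfig (embF Cg) rp.1 t
            + pushConfig (embF Cg) rp.2 t := happ
        have hleF : pushConfig (embF Cg) rp.1 ≤ c5 := hle
        have hr0 : rp.1 Cf.output = 0 := hob rp hrp
        have hle2 : ∀ s, rp.1 s ≤ c5 (embF Cg s) := fun s => by
          have h := Pi.le_def.mp hleF (embF Cg s)
          rwa [pushConfig_apply (embF_injective Cg)] at h
        have hru : rp.1 ≤ u := by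
          rw [Pi.le_def]; intro s
          rcases eq_or_ne s Cf.output with rfl | h
          · rw [hr0]; exact Nat.zero_le _
          · rw [← hu2 s h]; exact hle2 s
        have hu1' : Cf.Reachable of (u - rp.1 + rp.2) :=
          Relation.ReflTransGen.tail hu1 ⟨rp, hrp, hru, rfl⟩
        have hp0 : rp.2 Cf.output = 0 := by
          have e1 := hof2 u hu1
          have e2 := hof2 _ hu1'
          have e3 : (u - rp.1 + rp.2) Cf.output
              = u Cf.output - rp.1 Cf.output + rp.2 Cf.output := rfl
          rw [e3, hr0] at e2
          omega
        refine ⟨?_, ⟨u - rp.1 + rp.2, hu1', ?_⟩, ?_⟩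
        · rw [happF none, pushConfig_eq_zero _ (fun s => embF_ne_none Cg s),
            pushConfig_eq_zero _ (fun s => embF_ne_none Cg s), ihn]
        · intro s hs
          rw [happF (embF Cg s), pushConfig_apply (embF_injective Cg),
            pushConfig_apply (embF_injective Cg), hu2 s hs]
          simp only [Pi.add_apply, Pi.sub_apply]
        · have h : (fun s => c6 (embG Cf Cg s)) = (fun s => c5 (embG Cf Cg s)) := by
            funext s
            rcases eq_or_ne s (Cg.inputs 0) with rfl | h
            · rw [embG_input, happF (embF Cg Cf.output),
                pushConfig_apply (embF_injective Cg),
                pushConfig_apply (embF_injective Cg), hr0, hp0]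
              omega
            · rw [happF (embG Cf Cg s), pushConfig_eq_zero _ (embF_ne_embG Cf Cg h),
                pushConfig_eq_zero _ (embF_ne_embG Cf Cg h)]
              omega
          rw [h]; exact ihG
      · have happG : ∀ t, c6 t = c5 t - pushConfig (embG Cf Cg) rp.1 t
            + pushConfig (embG Cf Cg) rp.2 t := happ
        have hleG : pushConfig (embG Cf Cg) rp.1 ≤ c5 := hle
        have hle2 : ∀ s, rp.1 s ≤ c5 (embG Cf Cg s) := fun s => by
          have h := Pi.le_def.mp hleG (embG Cf Cg s)
          rwa [pushConfig_apply (embG_injective Cf Cg)] at h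
        refine ⟨?_, ⟨u, hu1, ?_⟩, ?_⟩
        · rw [happG none, pushConfig_eq_zero _ (fun s => embG_ne_none Cf Cg s),
            pushConfig_eq_zero _ (fun s => embG_ne_none Cf Cg s), ihn]
        · intro s hs
          rw [happG (embF Cg s), pushConfig_eq_zero _ (embG_ne_embF Cf Cg hs),
            pushConfig_eq_zero _ (embG_ne_embF Cf Cg hs), hu2 s hs]
          omega
        · have heq : (fun s => c6 (embG Cf Cg s))
              = ((fun s => c5 (embG Cf Cg s)) - rp.1 + rp.2) := by
            funext s
            rw [Pi.add_apply, Pi.sub_apply, happG (embG Cf Cg s),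
              pushConfig_apply (embG_injective Cf Cg),
              pushConfig_apply (embG_injective Cf Cg)]
          rw [heq]
          exact Relation.ReflTransGen.tail ihG ⟨rp, hrp, Pi.le_def.mpr hle2, rfl⟩
      · exfalso
        have hleL : (Pi.single (none : ConcatSpecies (σf := σf) Cg) 1 :
            ConcatSpecies (σf := σf) Cg → ℕ) ≤ c5 := hle
        have h := Pi.le_def.mp hleL none
        rw [Pi.single_eq_same, ihn] at h
        omega
  refine ⟨c3, Relation.ReflTransGen.trans hr2 hr3, ?_, ?_⟩
  · intro c4 h4
    obtain ⟨-, -, hreachG4⟩ := hJ c4 h4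
    have h5 := hog2 _ hreachG4
    show c4 (embG Cf Cg Cg.output) = c3 (embG Cf Cg Cg.output)
    exact h5.trans (hg3 Cg.output).symm
  · show c3 (embG Cf Cg Cg.output) = g (f x)
    rw [hg3 Cg.output]
    exact hog3
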